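/- Let N ≥ 1 and let M be a ℂ-vector space endowed with endomorphisms ∂_{i,k} and ω_{i,k} (1 ≤ i ≤ N, k ∈ ℤ) satisfying [∂_{i,k}, ∂_{j,l}] = 0, [ω_{i,k}, ω_{j,l}] = 0, and [∂_{i,k}, ω_{j,l}] = k δ_{ij} δ_{k+l,0} id_M for all i, j, k, l. Let M_0 ⊆ M be a subspace with ∂_{i,k} M_0 = 0 and ω_{i,k} M_0 = 0 for all i and all k > 0, and suppose M is spanned by the vectors obtained by applying finitely many of the operators ∂_{i,−n}, ω_{i,−n} (n > 0) to elements of M_0. If N' ⊆ M is a nonzero subspace with ∂_{i,k} N' ⊆ N' and ω_{i,k} N' ⊆ N' for all i and all k ∈ ℤ, then N' ∩ M_0 ≠ 0. (This is the statement that every nonzero submodule of a filtered module over the algebra of twisted chiral differential operators on a chiralization-suitable affine chart meets the generating subspace M_0 nontrivially.) -/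

import Mathlib

noncomputable section

namespace TCDOProof

set_option linter.unusedSectionVars false

variable {N : ℕ} {M : Type} [AddCommGroup M] [Module ℂ M]
variable (D W : Fin N → ℤ → Module.End ℂ M)

/-- allowed lowering operators with mode bound `w` -/
def Ok (w : ℕ) (f : Module.End ℂ M) : Prop :=
  ∃ (i : Fin N) (n : ℕ), n < w ∧ (f = D i (-((n:ℤ)+1)) ∨ f = W i (-((n:ℤ)+1)))

def Aop (i : Fin N) (n : ℕ) : Module.End ℂ M :=
  W i (-((n:ℤ)+1)) * D i ((n:ℤ)+1) + D i (-((n:ℤ)+1)) * W i ((n:ℤ)+1)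

def Eop (w : ℕ) : Module.End ℂ M :=
  ∑ i : Fin N, ∑ n ∈ Finset.range w, (((n:ℂ)+1)⁻¹) • Aop D W i n

def Qop (w j : ℕ) : Module.End ℂ M :=
  (((List.range j).map (fun t => Eop D W w - ((t:ℂ)+1) • 1)).prod)

lemma Ok_mono {w w' : ℕ} (h : w ≤ w') {f : Module.End ℂ M} (hf : Ok D W w f) :
    Ok D W w' f := by
  obtain ⟨i, n, hn, hf⟩ := hf
  exact ⟨i, n, lt_of_lt_of_le hn h, hf⟩

variable (M0 : Submodule ℂ M)

def Tset (j w : ℕ) : Set M :=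
  {y | ∃ (l : List (Module.End ℂ M)) (x : M), x ∈ M0 ∧ l.length ≤ j ∧
    (∀ f ∈ l, Ok D W w f) ∧ y = l.foldr (fun f z => f z) x}

def Sp (j w : ℕ) : Submodule ℂ M := Submodule.span ℂ (Tset D W M0 j w)

lemma Tset_mono {j w j' w' : ℕ} (hj : j ≤ j') (hw : w ≤ w') :
    Tset D W M0 j w ⊆ Tset D W M0 j' w' := by
  rintro y ⟨l, x, hx, hl, hok, rfl⟩
  exact ⟨l, x, hx, le_trans hl hj, fun f hf => Ok_mono D W hw (hok f hf), rfl⟩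

lemma Sp_mono {j w j' w' : ℕ} (hj : j ≤ j') (hw : w ≤ w') :
    Sp D W M0 j w ≤ Sp D W M0 j' w' :=
  Submodule.span_mono (Tset_mono D W M0 hj hw)

variable
  (hDD : ∀ (i j : Fin N) (k l : ℤ) (x : M), D i k (D j l x) = D j l (D i k x))
  (hWW : ∀ (i j : Fin N) (k l : ℤ) (x : M), W i k (W j l x) = W j l (W i k x))
  (hDW : ∀ (i j : Fin N) (k l : ℤ) (x : M),
      D i k (W j l x) - W j l (D i k x) = if i = j ∧ k + l = 0 then (k : ℂ) • x else 0)

include hDD hWW hDW in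
lemma Aop_commW (i : Fin N) (n : ℕ) (j : Fin N) (m : ℕ) (y : M) :
    Aop D W i n (W j (-((m:ℤ)+1)) y) =
      W j (-((m:ℤ)+1)) (Aop D W i n y) +
      (if i = j ∧ n = m then ((m:ℂ)+1) • W j (-((m:ℤ)+1)) y else 0) := by
  have h1 : D i ((n:ℤ)+1) (W j (-((m:ℤ)+1)) y) =
      W j (-((m:ℤ)+1)) (D i ((n:ℤ)+1) y) + (if i = j ∧ n = m then ((n:ℂ)+1) • y else 0) := by
    have h := hDW i j ((n:ℤ)+1) (-((m:ℤ)+1)) y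
    rw [sub_eq_iff_eq_add'] at h
    rw [h]
    congr 1
    have hiff : (i = j ∧ (n:ℤ)+1 + -((m:ℤ)+1) = 0) ↔ (i = j ∧ n = m) := by
      constructor <;> rintro ⟨ha, hb⟩ <;> exact ⟨ha, by omega⟩
    rw [if_congr hiff rfl rfl]
    push_cast
    rfl
  have h3 : ∀ z, D i (-((n:ℤ)+1)) (W j (-((m:ℤ)+1)) z) =
      W j (-((m:ℤ)+1)) (D i (-((n:ℤ)+1)) z) := by
    intro z
    have h := hDW i j (-((n:ℤ)+1)) (-((m:ℤ)+1)) z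
    rw [if_neg (by rintro ⟨-, hb⟩; omega), sub_eq_zero] at h
    exact h
  simp only [Aop, LinearMap.add_apply, Module.End.mul_apply]
  rw [h1, map_add, hWW i j ((n:ℤ)+1) (-((m:ℤ)+1)), h3, map_add]
  by_cases hc : i = j ∧ n = m
  · obtain ⟨rfl, rfl⟩ := hc
    rw [if_pos ⟨rfl, rfl⟩, if_pos ⟨rfl, rfl⟩, map_smul]
    abel
  · rw [if_neg hc, if_neg hc, map_zero, add_zero, add_zero,
      hWW i j (-((n:ℤ)+1)) (-((m:ℤ)+1))]

include hDD hWW hDW in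
lemma Aop_commD (i : Fin N) (n : ℕ) (j : Fin N) (m : ℕ) (y : M) :
    Aop D W i n (D j (-((m:ℤ)+1)) y) =
      D j (-((m:ℤ)+1)) (Aop D W i n y) +
      (if i = j ∧ n = m then ((m:ℂ)+1) • D j (-((m:ℤ)+1)) y else 0) := by
  have h1 : W i ((n:ℤ)+1) (D j (-((m:ℤ)+1)) y) =
      D j (-((m:ℤ)+1)) (W i ((n:ℤ)+1) y) + (if i = j ∧ n = m then ((m:ℂ)+1) • y else 0) := by
    have h := hDW j i (-((m:ℤ)+1)) ((n:ℤ)+1) y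
    rw [sub_eq_iff_eq_add] at h
    rw [h]
    by_cases hc : i = j ∧ n = m
    · obtain ⟨rfl, rfl⟩ := hc
      rw [if_pos ⟨rfl, by omega⟩, if_pos (⟨rfl, rfl⟩ : i = i ∧ n = n)]
      push_cast
      module
    · rw [if_neg (by rintro ⟨rfl, hb⟩; exact hc ⟨rfl, by omega⟩), if_neg hc, zero_add, add_zero]
  have h3 : ∀ z, W i (-((n:ℤ)+1)) (D j (-((m:ℤ)+1)) z) =
      D j (-((m:ℤ)+1)) (W i (-((n:ℤ)+1)) z) := by
    intro z
    have h := hDW j i (-((m:ℤ)+1)) (-((n:ℤ)+1)) z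
    rw [if_neg (by rintro ⟨-, hb⟩; omega), sub_eq_zero] at h
    exact h.symm
  simp only [Aop, LinearMap.add_apply, Module.End.mul_apply]
  rw [hDD i j ((n:ℤ)+1) (-((m:ℤ)+1)), h3, h1, map_add, map_add]
  by_cases hc : i = j ∧ n = m
  · obtain ⟨rfl, rfl⟩ := hc
    rw [if_pos ⟨rfl, rfl⟩, if_pos ⟨rfl, rfl⟩, map_smul]
    abel
  · rw [if_neg hc, if_neg hc, map_zero, add_zero, add_zero,
      hDD i j (-((n:ℤ)+1)) (-((m:ℤ)+1))]

include hDD hWW hDW in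
lemma Eop_comm {w : ℕ} {f : Module.End ℂ M} (hf : Ok D W w f) (y : M) :
    Eop D W w (f y) = f (Eop D W w y) + f y := by
  obtain ⟨j, m, hm, hf⟩ := hf
  have key : ∀ (i : Fin N) (n : ℕ), Aop D W i n (f y) =
      f (Aop D W i n y) + (if i = j ∧ n = m then ((m:ℂ)+1) • f y else 0) := by
    intro i n
    rcases hf with rfl | rfl
    · exact Aop_commD D W hDD hWW hDW i n j m y
    · exact Aop_commW D W hDD hWW hDW i n j m y
  have expand : ∀ z : M, Eop D W w z = ∑ i : Fin N, ∑ n ∈ Finset.range w,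
      (((n:ℂ)+1)⁻¹) • Aop D W i n z := by
    intro z
    simp [Eop, LinearMap.sum_apply, LinearMap.smul_apply]
  rw [expand (f y), expand y]
  have step : ∀ (i : Fin N) (n : ℕ),
      (((n:ℂ)+1)⁻¹) • Aop D W i n (f y) =
      (((n:ℂ)+1)⁻¹) • f (Aop D W i n y) + (if i = j ∧ n = m then f y else 0) := by
    intro i n
    rw [key i n, smul_add]
    congr 1
    by_cases hc : i = j ∧ n = m
    · obtain ⟨rfl, rfl⟩ := hc
      rw [if_pos ⟨rfl, rfl⟩, if_pos (⟨rfl, rfl⟩ : i = i ∧ n = n), smul_smul,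
        inv_mul_cancel₀ (Nat.cast_add_one_ne_zero n), one_smul]
    · rw [if_neg hc, if_neg hc, smul_zero]
  have hsum1 : (∑ i : Fin N, ∑ n ∈ Finset.range w, (((n:ℂ)+1)⁻¹) • f (Aop D W i n y))
      = f (∑ i : Fin N, ∑ n ∈ Finset.range w, (((n:ℂ)+1)⁻¹) • Aop D W i n y) := by
    rw [map_sum]
    refine Finset.sum_congr rfl fun i _ => ?_
    rw [map_sum]
    exact Finset.sum_congr rfl fun n _ => (map_smul f _ _).symm
  have hsum2 : (∑ i : Fin N, ∑ n ∈ Finset.range w,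
      if i = j ∧ n = m then f y else (0:M)) = f y := by
    have inner : ∀ i : Fin N, (∑ n ∈ Finset.range w,
        if i = j ∧ n = m then f y else (0:M)) = if i = j then f y else 0 := by
      intro i
      by_cases hij : i = j
      · simp [hij, Finset.sum_ite_eq', hm]
      · simp [hij]
    rw [Finset.sum_congr rfl (fun i _ => inner i)]
    simp
  calc (∑ i : Fin N, ∑ n ∈ Finset.range w, (((n:ℂ)+1)⁻¹) • Aop D W i n (f y))
      = ∑ i : Fin N, ∑ n ∈ Finset.range w,
        ((((n:ℂ)+1)⁻¹) • f (Aop D W i n y) + (if i = j ∧ n = m then f y else 0)) := by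
        exact Finset.sum_congr rfl fun i _ => Finset.sum_congr rfl fun n _ => step i n
    _ = (∑ i : Fin N, ∑ n ∈ Finset.range w, (((n:ℂ)+1)⁻¹) • f (Aop D W i n y))
        + (∑ i : Fin N, ∑ n ∈ Finset.range w, if i = j ∧ n = m then f y else (0:M)) := by
        rw [Finset.sum_congr rfl (fun i _ => Finset.sum_add_distrib), Finset.sum_add_distrib]
    _ = f (∑ i : Fin N, ∑ n ∈ Finset.range w, (((n:ℂ)+1)⁻¹) • Aop D W i n y) + f y := by
        rw [hsum1, hsum2]

include hDD hWW hDW in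
lemma Eop_M0
    (hD0 : ∀ (i : Fin N) (k : ℤ), 0 < k → ∀ x ∈ M0, D i k x = 0)
    (hW0 : ∀ (i : Fin N) (k : ℤ), 0 < k → ∀ x ∈ M0, W i k x = 0)
    {w : ℕ} {x : M} (hx : x ∈ M0) : Eop D W w x = 0 := by
  have : ∀ (i : Fin N) (n : ℕ), Aop D W i n x = 0 := by
    intro i n
    simp only [Aop, LinearMap.add_apply, Module.End.mul_apply]
    rw [hD0 i ((n:ℤ)+1) (by omega) x hx, hW0 i ((n:ℤ)+1) (by omega) x hx,
      map_zero, map_zero, add_zero]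
  simp [Eop, LinearMap.sum_apply, LinearMap.smul_apply, this]

include hDD hWW hDW in
lemma Eop_diag
    (hD0 : ∀ (i : Fin N) (k : ℤ), 0 < k → ∀ x ∈ M0, D i k x = 0)
    (hW0 : ∀ (i : Fin N) (k : ℤ), 0 < k → ∀ x ∈ M0, W i k x = 0)
    {w : ℕ} (l : List (Module.End ℂ M)) (hl : ∀ f ∈ l, Ok D W w f)
    {x : M} (hx : x ∈ M0) :
    Eop D W w (l.foldr (fun f z => f z) x) =
      (l.length : ℂ) • (l.foldr (fun f z => f z) x) := by
  induction l with
  | nil => simpa using Eop_M0 D W M0 hDD hWW hDW hD0 hW0 hx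
  | cons f l ih =>
    have hf := hl f (List.mem_cons_self (a := f) (l := l))
    have hl' : ∀ g ∈ l, Ok D W w g := fun g hg => hl g (List.mem_cons_of_mem f hg)
    show Eop D W w (f (l.foldr _ x)) = _
    rw [Eop_comm D W hDD hWW hDW hf, ih hl', map_smul]
    show _ = ((l.length + 1 : ℕ) : ℂ) • f (l.foldr _ x)
    push_cast
    rw [add_smul, one_smul]

lemma Qop_succ (w j : ℕ) :
    Qop D W w (j+1) = Qop D W w j * (Eop D W w - ((j:ℂ)+1) • 1) := by
  simp [Qop, List.range_succ]

lemma Qop_eigen {w : ℕ} {u : M} {c : ℂ} (h : Eop D W w u = c • u) (j : ℕ) :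
    Qop D W w j u = (∏ t ∈ Finset.range j, (c - ((t:ℂ)+1))) • u := by
  induction j with
  | zero => simp [Qop]
  | succ j ih =>
    rw [Qop_succ, Module.End.mul_apply]
    have h1 : (Eop D W w - ((j:ℂ)+1) • 1) u = (c - ((j:ℂ)+1)) • u := by
      rw [LinearMap.sub_apply, LinearMap.smul_apply, Module.End.one_apply, h, sub_smul]
    rw [h1, map_smul, ih, smul_smul, Finset.prod_range_succ, mul_comm]

include hDD hWW hDW in
lemma Qop_Tset
    (hD0 : ∀ (i : Fin N) (k : ℤ), 0 < k → ∀ x ∈ M0, D i k x = 0)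
    (hW0 : ∀ (i : Fin N) (k : ℤ), 0 < k → ∀ x ∈ M0, W i k x = 0)
    {w j : ℕ} {y : M} (hy : y ∈ Tset D W M0 j w) : Qop D W w j y ∈ M0 := by
  obtain ⟨l, x, hx, hl, hok, rfl⟩ := hy
  have hE := Eop_diag D W M0 hDD hWW hDW hD0 hW0 l hok hx
  rw [Qop_eigen D W hE j]
  rcases Nat.eq_zero_or_pos l.length with h0 | hpos
  · have hnil : l = [] := List.eq_nil_of_length_eq_zero h0
    subst hnil
    exact M0.smul_mem _ hx
  · obtain ⟨m, hm⟩ : ∃ m, l.length = m + 1 := ⟨l.length - 1, by omega⟩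
    have hz : (∏ t ∈ Finset.range j, ((l.length:ℂ) - ((t:ℂ)+1))) = 0 := by
      refine Finset.prod_eq_zero (Finset.mem_range.mpr (show m < j by omega)) ?_
      rw [hm]
      push_cast
      ring
    rw [hz, zero_smul]
    exact M0.zero_mem

include hDD hWW hDW in
lemma Qop_Sp
    (hD0 : ∀ (i : Fin N) (k : ℤ), 0 < k → ∀ x ∈ M0, D i k x = 0)
    (hW0 : ∀ (i : Fin N) (k : ℤ), 0 < k → ∀ x ∈ M0, W i k x = 0)
    {w j : ℕ} {v : M} (hv : v ∈ Sp D W M0 j w) : Qop D W w j v ∈ M0 := by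
  refine Submodule.span_induction ?_ ?_ ?_ ?_ hv
  · intro y hy
    exact Qop_Tset D W M0 hDD hWW hDW hD0 hW0 hy
  · rw [map_zero]; exact M0.zero_mem
  · intro a b _ _ ha hb; rw [map_add]; exact M0.add_mem ha hb
  · intro c a _ ha; rw [map_smul]; exact M0.smul_mem c ha

include hDD hWW hDW in
lemma pos_comm {w : ℕ} (i : Fin N) (k : ℤ) {f : Module.End ℂ M} (hf : Ok D W w f) :
    (∃ c : ℂ, ∀ y, D i k (f y) = f (D i k y) + c • y) ∧
    (∃ c : ℂ, ∀ y, W i k (f y) = f (W i k y) + c • y) := by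
  obtain ⟨j, m, hm, hf | hf⟩ := hf <;> subst hf
  · constructor
    · exact ⟨0, fun y => by rw [hDD i j k (-((m:ℤ)+1)), zero_smul, add_zero]⟩
    · refine ⟨if j = i ∧ -((m:ℤ)+1) + k = 0 then ((m:ℂ)+1) else 0, fun y => ?_⟩
      have h := hDW j i (-((m:ℤ)+1)) k y
      have h2 : W i k (D j (-((m:ℤ)+1)) y) = D j (-((m:ℤ)+1)) (W i k y) -
          (if j = i ∧ -((m:ℤ)+1) + k = 0 then ((-((m:ℤ)+1) : ℤ):ℂ) • y else 0) := by
        rw [← h]; abel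
      rw [h2]
      by_cases hc : j = i ∧ -((m:ℤ)+1) + k = 0
      · rw [if_pos hc, if_pos hc, sub_eq_add_neg]
        congr 1
        push_cast
        module
      · rw [if_neg hc, if_neg hc, sub_zero, zero_smul, add_zero]
  · constructor
    · refine ⟨if i = j ∧ k + -((m:ℤ)+1) = 0 then ((k:ℤ):ℂ) else 0, fun y => ?_⟩
      have h := hDW i j k (-((m:ℤ)+1)) y
      rw [sub_eq_iff_eq_add'] at h
      rw [h]
      by_cases hc : i = j ∧ k + -((m:ℤ)+1) = 0
      · rw [if_pos hc, if_pos hc]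
      · simp only [if_neg hc, zero_smul, add_zero]
    · exact ⟨0, fun y => by rw [hWW i j k (-((m:ℤ)+1)), zero_smul, add_zero]⟩

lemma apply_mem_Sp {w j : ℕ} {f : Module.End ℂ M} (hf : Ok D W w f)
    {u : M} (hu : u ∈ Sp D W M0 j w) : f u ∈ Sp D W M0 (j+1) w := by
  refine Submodule.span_induction ?_ ?_ ?_ ?_ hu
  · rintro y ⟨l, x, hx, hl, hok, rfl⟩
    refine Submodule.subset_span ⟨f :: l, x, hx, by simpa using hl, ?_, rfl⟩
    intro g hg
    rcases List.mem_cons.mp hg with rfl | hg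
    · exact hf
    · exact hok g hg
  · rw [map_zero]; exact Submodule.zero_mem _
  · intro a b _ _ ha hb; rw [map_add]; exact Submodule.add_mem _ ha hb
  · intro c a _ ha; rw [map_smul]; exact Submodule.smul_mem _ c ha

include hDD hWW hDW in
lemma lower
    (hD0 : ∀ (i : Fin N) (k : ℤ), 0 < k → ∀ x ∈ M0, D i k x = 0)
    (hW0 : ∀ (i : Fin N) (k : ℤ), 0 < k → ∀ x ∈ M0, W i k x = 0)
    {w : ℕ} (i : Fin N) (k : ℤ) (hk : 0 < k)
    (P : Module.End ℂ M) (hP : P = D i k ∨ P = W i k) :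
    ∀ (l : List (Module.End ℂ M)) (j : ℕ), l.length ≤ j + 1 →
      (∀ f ∈ l, Ok D W w f) → ∀ x ∈ M0,
      P (l.foldr (fun f z => f z) x) ∈ Sp D W M0 j w := by
  intro l
  induction l with
  | nil =>
    intro j _ _ x hx
    have hz : P x = 0 := by
      rcases hP with rfl | rfl
      exacts [hD0 i k hk x hx, hW0 i k hk x hx]
    show P x ∈ _
    rw [hz]
    exact Submodule.zero_mem _
  | cons f l ih =>
    intro j hlen hok x hx
    have hf : Ok D W w f := hok f (List.mem_cons_self (a := f) (l := l))
    have hok' : ∀ g ∈ l, Ok D W w g := fun g hg => hok g (List.mem_cons_of_mem f hg)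
    have hll : l.length ≤ j := by simpa using hlen
    obtain ⟨c, hc⟩ : ∃ c : ℂ, ∀ z, P (f z) = f (P z) + c • z := by
      rcases hP with rfl | rfl
      exacts [(pos_comm D W hDD hWW hDW i k hf).1,
        (pos_comm D W hDD hWW hDW i k hf).2]
    show P (f (l.foldr _ x)) ∈ _
    rw [hc (l.foldr _ x)]
    refine Submodule.add_mem _ ?_
      (Submodule.smul_mem _ c (Submodule.subset_span ⟨l, x, hx, hll, hok', rfl⟩))
    cases j with
    | zero =>
      have hnil : l = [] := List.eq_nil_of_length_eq_zero (Nat.le_zero.mp hll)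
      subst hnil
      have hz : P x = 0 := by
        rcases hP with rfl | rfl
        exacts [hD0 i k hk x hx, hW0 i k hk x hx]
      show f (P x) ∈ _
      rw [hz, map_zero]
      exact Submodule.zero_mem _
    | succ j' =>
      exact apply_mem_Sp D W M0 hf (ih j' hll hok' x hx)

include hDD hWW hDW in
lemma lower_span
    (hD0 : ∀ (i : Fin N) (k : ℤ), 0 < k → ∀ x ∈ M0, D i k x = 0)
    (hW0 : ∀ (i : Fin N) (k : ℤ), 0 < k → ∀ x ∈ M0, W i k x = 0)
    {w j : ℕ} (i : Fin N) (k : ℤ) (hk : 0 < k)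
    (P : Module.End ℂ M) (hP : P = D i k ∨ P = W i k)
    {v : M} (hv : v ∈ Sp D W M0 (j+1) w) : P v ∈ Sp D W M0 j w := by
  refine Submodule.span_induction ?_ ?_ ?_ ?_ hv
  · rintro y ⟨l, x, hx, hl, hok, rfl⟩
    exact lower D W M0 hDD hWW hDW hD0 hW0 i k hk P hP l j hl hok x hx
  · rw [map_zero]; exact Submodule.zero_mem _
  · intro a b _ _ ha hb; rw [map_add]; exact Submodule.add_mem _ ha hb
  · intro c a _ ha; rw [map_smul]; exact Submodule.smul_mem _ c ha

include hDD hWW hDW in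
lemma bound_exists (l : List (Module.End ℂ M))
    (hok : ∀ f ∈ l, (∃ (i : Fin N) (n : ℤ), 0 < n ∧ f = D i (-n)) ∨
                    (∃ (i : Fin N) (n : ℤ), 0 < n ∧ f = W i (-n))) :
    ∃ w : ℕ, ∀ f ∈ l, Ok D W w f := by
  induction l with
  | nil => exact ⟨0, by simp⟩
  | cons f l ih =>
    obtain ⟨w, hw⟩ := ih (fun g hg => hok g (List.mem_cons_of_mem f hg))
    have hf := hok f (List.mem_cons_self (a := f) (l := l))
    have : ∃ w' : ℕ, Ok D W w' f := by
      rcases hf with ⟨i, n, hn, hfe⟩ | ⟨i, n, hn, hfe⟩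
      · refine ⟨(n-1).toNat + 1, i, (n-1).toNat, Nat.lt_succ_self _, Or.inl ?_⟩
        rw [hfe]
        congr 1
        omega
      · refine ⟨(n-1).toNat + 1, i, (n-1).toNat, Nat.lt_succ_self _, Or.inr ?_⟩
        rw [hfe]
        congr 1
        omega
    obtain ⟨w', hw'⟩ := this
    refine ⟨max w w', fun g hg => ?_⟩
    rcases List.mem_cons.mp hg with rfl | hg
    · exact Ok_mono D W (le_max_right w w') hw'
    · exact Ok_mono D W (le_max_left w w') (hw g hg)

end TCDOProof


/-- **Statement 17.** Every nonzero submodule of a filtered module over the algebra of twisted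
chiral differential operators on a chiralization-suitable affine chart meets the generating
subspace `M₀` nontrivially: if the modes `∂_{i,k}`, `ω_{i,k}` satisfy the Heisenberg relations,
positive modes kill `M₀`, `M` is generated from `M₀` by the lowering operators, and `N' ⊆ M` is
a nonzero subspace stable under all the operators, then `N' ∩ M₀ ≠ 0`. -/
theorem tcdo_submodule_meets_top (N : ℕ) (hN : 1 ≤ N)
    (M : Type) [AddCommGroup M] [Module ℂ M]
    (D W : Fin N → ℤ → Module.End ℂ M)
    (hDD : ∀ (i j : Fin N) (k l : ℤ) (x : M), D i k (D j l x) = D j l (D i k x))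
    (hWW : ∀ (i j : Fin N) (k l : ℤ) (x : M), W i k (W j l x) = W j l (W i k x))
    (hDW : ∀ (i j : Fin N) (k l : ℤ) (x : M),
      D i k (W j l x) - W j l (D i k x) = if i = j ∧ k + l = 0 then (k : ℂ) • x else 0)
    (M0 : Submodule ℂ M)
    (hD0 : ∀ (i : Fin N) (k : ℤ), 0 < k → ∀ x ∈ M0, D i k x = 0)
    (hW0 : ∀ (i : Fin N) (k : ℤ), 0 < k → ∀ x ∈ M0, W i k x = 0)
    (hspan : Submodule.span ℂ {y : M | ∃ (l : List (Module.End ℂ M)) (x : M), x ∈ M0 ∧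
        (∀ f ∈ l, (∃ (i : Fin N) (n : ℤ), 0 < n ∧ f = D i (-n)) ∨
                  (∃ (i : Fin N) (n : ℤ), 0 < n ∧ f = W i (-n))) ∧
        y = l.foldr (fun f z => f z) x} = ⊤)
    (N' : Submodule ℂ M) (hne : N' ≠ ⊥)
    (hstab : ∀ (i : Fin N) (k : ℤ), ∀ x ∈ N', D i k x ∈ N' ∧ W i k x ∈ N') :
    N' ⊓ M0 ≠ ⊥ := by
  classical
  open TCDOProof in
  obtain ⟨v, hvN, hv0⟩ := (Submodule.ne_bot_iff N').mp hne
  have key : ∀ (j : ℕ), ∀ (w : ℕ) (v : M), v ∈ N' → v ≠ 0 →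
      v ∈ Sp D W M0 j w → N' ⊓ M0 ≠ ⊥ := by
    intro j
    induction j with
    | zero =>
      intro w v hvN hv0 hvS
      have hsub : Sp D W M0 0 w ≤ M0 := by
        rw [Sp, Submodule.span_le]
        rintro y ⟨l, x, hx, hl, -, rfl⟩
        have hnil : l = [] := List.eq_nil_of_length_eq_zero (Nat.le_zero.mp hl)
        subst hnil
        simpa using hx
      rw [Submodule.ne_bot_iff]
      exact ⟨v, Submodule.mem_inf.mpr ⟨hvN, hsub hvS⟩, hv0⟩
    | succ j ih =>
      intro w v hvN hv0 hvS
      by_cases hps : ∃ (i : Fin N) (n : ℕ), n < w ∧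
          (D i ((n:ℤ)+1) v ≠ 0 ∨ W i ((n:ℤ)+1) v ≠ 0)
      · obtain ⟨i, n, hn, hx⟩ := hps
        have hk : (0:ℤ) < (n:ℤ)+1 := by omega
        rcases hx with hx | hx
        · exact ih w _ ((hstab i ((n:ℤ)+1) v hvN).1) hx
            (lower_span D W M0 hDD hWW hDW hD0 hW0 i ((n:ℤ)+1) hk _ (Or.inl rfl) hvS)
        · exact ih w _ ((hstab i ((n:ℤ)+1) v hvN).2) hx
            (lower_span D W M0 hDD hWW hDW hD0 hW0 i ((n:ℤ)+1) hk _ (Or.inr rfl) hvS)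
      · push_neg at hps
        have hE : Eop D W w v = 0 := by
          simp only [Eop, LinearMap.sum_apply, LinearMap.smul_apply, Aop,
            LinearMap.add_apply, Module.End.mul_apply]
          refine Finset.sum_eq_zero fun i _ => Finset.sum_eq_zero fun n hn => ?_
          rw [(hps i n (Finset.mem_range.mp hn)).1, (hps i n (Finset.mem_range.mp hn)).2,
            map_zero, map_zero, add_zero, smul_zero]
        have hQ : Qop D W w (j+1) v
            = (∏ t ∈ Finset.range (j+1), ((0:ℂ) - ((t:ℂ)+1))) • v :=
          Qop_eigen D W (by rw [hE, zero_smul]) (j+1)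
        have hQM : Qop D W w (j+1) v ∈ M0 :=
          Qop_Sp D W M0 hDD hWW hDW hD0 hW0 hvS
        have hcne : (∏ t ∈ Finset.range (j+1), ((0:ℂ) - ((t:ℂ)+1))) ≠ 0 := by
          refine Finset.prod_ne_zero_iff.mpr fun t _ => ?_
          rw [zero_sub, neg_ne_zero]
          exact Nat.cast_add_one_ne_zero t
        have hvM0 : v ∈ M0 := by
          rw [hQ] at hQM
          have h2 := M0.smul_mem (∏ t ∈ Finset.range (j+1), ((0:ℂ) - ((t:ℂ)+1)))⁻¹ hQM
          rwa [smul_smul, inv_mul_cancel₀ hcne, one_smul] at h2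
        rw [Submodule.ne_bot_iff]
        exact ⟨v, Submodule.mem_inf.mpr ⟨hvN, hvM0⟩, hv0⟩
  have hvsp : v ∈ ⨆ j : ℕ, Sp D W M0 j j := by
    have hvspan : v ∈ Submodule.span ℂ {y : M | ∃ (l : List (Module.End ℂ M)) (x : M),
        x ∈ M0 ∧
        (∀ f ∈ l, (∃ (i : Fin N) (n : ℤ), 0 < n ∧ f = D i (-n)) ∨
                  (∃ (i : Fin N) (n : ℤ), 0 < n ∧ f = W i (-n))) ∧
        y = l.foldr (fun f z => f z) x} := by
      rw [hspan]
      exact Submodule.mem_top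
    refine Submodule.span_le.mpr ?_ hvspan
    rintro y ⟨l, x, hx, hok, rfl⟩
    obtain ⟨w, hw⟩ := bound_exists D W hDD hWW hDW l hok
    have hmem : l.foldr (fun f z => f z) x ∈ Tset D W M0 (max w l.length) (max w l.length) :=
      ⟨l, x, hx, le_max_right w l.length,
        fun f hf => Ok_mono D W (le_max_left w l.length) (hw f hf), rfl⟩
    exact le_iSup (fun j => Sp D W M0 j j) (max w l.length) (Submodule.subset_span hmem)
  have hdir : Directed (· ≤ ·) (fun j : ℕ => Sp D W M0 j j) :=
    Monotone.directed_le (fun a b hab => Sp_mono D W M0 hab hab)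
  obtain ⟨j, hj⟩ := (Submodule.mem_iSup_of_directed _ hdir).mp hvsp
  exact key j j v hvN hv0 hj
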